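/- Let G be any group. Then Inn(G) is finite if and only if IA(G)* is finite. -/

import Mathlib

/-- The group of inner automorphisms of `G`. -/
def Inn (G : Type*) [Group G] : Subgroup (MulAut G) :=
  (MulAut.conj : G →* MulAut G).range

/-- The group of IA-automorphisms of `G` fixing the center elementwise. -/
def IAstar (G : Type*) [Group G] : Subgroup (MulAut G) where
  carrier := {α | (∀ g : G, g⁻¹ * α g ∈ commutator G) ∧ ∀ z ∈ Subgroup.center G, α z = z}
  one_mem' := by
    constructor
    · intro g; simp
    · intro z _; rfl
  mul_mem' := by
    rintro α β ⟨hα, hα'⟩ ⟨hβ, hβ'⟩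
    constructor
    · intro g
      have h : g⁻¹ * (α * β) g = (g⁻¹ * β g) * ((β g)⁻¹ * α (β g)) := by
        simp [MulAut.mul_apply, mul_assoc]
      rw [h]
      exact mul_mem (hβ g) (hα (β g))
    · intro z hz
      simp [MulAut.mul_apply, hβ' z hz, hα' z hz]
  inv_mem' := by
    rintro α ⟨hα, hα'⟩
    constructor
    · intro g
      have h := hα (α⁻¹ g)
      rw [MulAut.apply_inv_self] at h
      simpa using inv_mem h
    · intro z hz
      have h := congrArg (fun x => α⁻¹ x) (hα' z hz)
      simp only [MulAut.inv_apply_self] at h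
      exact h.symm

open scoped commutatorElement

section Aux

variable {G : Type*} [Group G]

open Subgroup QuotientGroup

lemma ker_conj_eq_center : (MulAut.conj : G →* MulAut G).ker = Subgroup.center G := by
  ext x
  simp only [MonoidHom.mem_ker, Subgroup.mem_center_iff]
  constructor
  · intro h g
    have := congrArg (fun (e : MulAut G) => e g) h
    simp only [MulAut.conj_apply, MulAut.one_apply] at this
    calc g * x = x * (x⁻¹ * g * x) := by group
    _ = x * (x * (x⁻¹ * g * x) * x⁻¹) := by
        have := congrArg (fun (e : MulAut G) => e (x⁻¹ * g * x)) h
        simpa [MulAut.conj_apply] using this.symm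
    _ = x * g := by group
  · intro h
    ext g
    simp only [MulAut.conj_apply, MulAut.one_apply]
    rw [← h g]; group

lemma commutator_central_right (g h z w : G) (hz : z ∈ Subgroup.center G)
    (hw : w ∈ Subgroup.center G) : ⁅g * z, h * w⁆ = ⁅g, h⁆ := by
  rw [Subgroup.mem_center_iff] at hz hw
  simp only [commutatorElement_def, mul_inv_rev]
  calc g * z * (h * w) * (z⁻¹ * g⁻¹) * (w⁻¹ * h⁻¹)
      = g * (z * h) * w * z⁻¹ * g⁻¹ * w⁻¹ * h⁻¹ := by group
    _ = g * (h * z) * w * z⁻¹ * g⁻¹ * w⁻¹ * h⁻¹ := by rw [hz h]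
    _ = g * h * (z * w * z⁻¹) * g⁻¹ * w⁻¹ * h⁻¹ := by group
    _ = g * h * (w * z * z⁻¹) * g⁻¹ * w⁻¹ * h⁻¹ := by rw [hz w]
    _ = g * h * (w * g⁻¹) * w⁻¹ * h⁻¹ := by group
    _ = g * h * (g⁻¹ * w) * w⁻¹ * h⁻¹ := by rw [hw g⁻¹]
    _ = ⁅g, h⁆ := by group

lemma finite_commutatorSet_of_finite_quotient_center
    [Finite (G ⧸ Subgroup.center G)] : Finite (commutatorSet G) := by
  have hsurj : Function.Surjective
      (fun p : (G ⧸ Subgroup.center G) × (G ⧸ Subgroup.center G) =>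
        (⟨⁅p.1.out, p.2.out⁆, p.1.out, p.2.out, rfl⟩ : commutatorSet G)) := by
    rintro ⟨c, g, h, rfl⟩
    refine ⟨(QuotientGroup.mk g, QuotientGroup.mk h), ?_⟩
    have hg : g⁻¹ * (QuotientGroup.mk g : G ⧸ Subgroup.center G).out ∈ Subgroup.center G := by
      rw [← QuotientGroup.eq]
      exact (QuotientGroup.out_eq' _).symm
    have hh : h⁻¹ * (QuotientGroup.mk h : G ⧸ Subgroup.center G).out ∈ Subgroup.center G := by
      rw [← QuotientGroup.eq]
      exact (QuotientGroup.out_eq' _).symm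
    have : ⁅(QuotientGroup.mk g : G ⧸ Subgroup.center G).out,
        (QuotientGroup.mk h : G ⧸ Subgroup.center G).out⁆ = ⁅g, h⁆ := by
      have e1 : (QuotientGroup.mk g : G ⧸ Subgroup.center G).out
          = g * (g⁻¹ * (QuotientGroup.mk g : G ⧸ Subgroup.center G).out) := by group
      have e2 : (QuotientGroup.mk h : G ⧸ Subgroup.center G).out
          = h * (h⁻¹ * (QuotientGroup.mk h : G ⧸ Subgroup.center G).out) := by group
      rw [e1, e2] at *
      exact commutator_central_right _ _ _ _ hg hh
    exact Subtype.ext this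
  exact Finite.of_surjective _ hsurj

end Aux

/-- For any group `G`, `Inn(G)` is finite iff `IA(G)*` is finite. -/
theorem inn_finite_iff_IAstar_finite (G : Type*) [Group G] :
    Finite (Inn G) ↔ Finite (IAstar G) := by
  classical
  have hker : (MulAut.conj : G →* MulAut G).ker = Subgroup.center G := ker_conj_eq_center
  have e : (G ⧸ Subgroup.center G) ≃ Inn G := by
    rw [← hker]
    exact (QuotientGroup.quotientKerEquivRange (MulAut.conj : G →* MulAut G)).toEquiv
  constructor
  · intro hInn
    have hQ : Finite (G ⧸ Subgroup.center G) := Finite.of_equiv _ e.symm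
    have hCS : Finite (commutatorSet G) := finite_commutatorSet_of_finite_quotient_center
    have hComm : Finite (commutator G) := inferInstance
    -- embed IAstar into functions from the quotient to the commutator subgroup
    have hinj : Function.Injective
        (fun (α : IAstar G) (q : G ⧸ Subgroup.center G) =>
          (⟨(q.out)⁻¹ * (α : MulAut G) q.out, α.2.1 q.out⟩ : commutator G)) := by
      intro α β hfg
      have key : ∀ g : G, (α : MulAut G) g = (β : MulAut G) g := by
        intro g
        have hq := congrFun hfg (QuotientGroup.mk g)
        have hval : (α : MulAut G) (QuotientGroup.mk g : G ⧸ Subgroup.center G).out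
            = (β : MulAut G) (QuotientGroup.mk g : G ⧸ Subgroup.center G).out := by
          have := congrArg Subtype.val hq
          simpa using mul_left_cancel (a := ((QuotientGroup.mk g : G ⧸ Subgroup.center G).out)⁻¹) this
        set r := (QuotientGroup.mk g : G ⧸ Subgroup.center G).out with hr
        have hz : r⁻¹ * g ∈ Subgroup.center G := by
          rw [← QuotientGroup.eq]
          exact QuotientGroup.out_eq' _
        have hg : g = r * (r⁻¹ * g) := by group
        have hαg : (α : MulAut G) g = (α : MulAut G) r * (r⁻¹ * g) := by
          conv_lhs => rw [hg]
          rw [map_mul, α.2.2 _ hz]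
        have hβg : (β : MulAut G) g = (β : MulAut G) r * (r⁻¹ * g) := by
          conv_lhs => rw [hg]
          rw [map_mul, β.2.2 _ hz]
        rw [hαg, hβg, hval]
      exact Subtype.ext (MulEquiv.ext key)
    exact Finite.of_injective _ hinj
  · intro hIA
    have hle : Inn G ≤ IAstar G := by
      rintro x ⟨g, rfl⟩
      constructor
      · intro h
        simp only [MulAut.conj_apply]
        have : h⁻¹ * (g * h * g⁻¹) = ⁅h⁻¹, g⁆ := by
          rw [commutatorElement_def]; group
        rw [this]
        exact Subgroup.commutator_mem_commutator (Subgroup.mem_top _) (Subgroup.mem_top _)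
      · intro z hz
        simp only [MulAut.conj_apply]
        rw [Subgroup.mem_center_iff] at hz
        rw [hz g]; group
    exact Finite.of_injective _ (Subgroup.inclusion_injective hle)
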